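/- Let R and B be disjoint finite sets of points in a real inner product space with |R| = |B| = n ≥ 1, and let σ : R → B be a bijection that maximizes the sum ∑_{r ∈ R} ‖r − σ(r)‖² over all bijections from R to B. Then the diametral balls B(r σ(r)), r ∈ R, have a common point; in particular, for any n red and n blue points there is a perfect red-blue matching whose diametral balls intersect. -/

import Mathlib

open Finset RealInnerProductSpace in
private lemma rbtm_swap {E : Type*} [NormedAddCommGroup E] [InnerProductSpace ℝ E]
    (n : ℕ) (a b : Fin n → E)
    (hmax : ∀ π : Equiv.Perm (Fin n),
      ∑ i, ‖a i - b (π i)‖ ^ 2 ≤ ∑ i, ‖a i - b i‖ ^ 2) :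
    ∀ i j, (⟪a i - a j, b i - b j⟫ : ℝ) ≤ 0 := by
  intro i j
  rcases eq_or_ne i j with rfl | hij
  · simp
  · have h := hmax (Equiv.swap i j)
    have h2 : (0:ℝ) ≤ ∑ k, (‖a k - b k‖ ^ 2 - ‖a k - b (Equiv.swap i j k)‖ ^ 2) := by
      rw [Finset.sum_sub_distrib]; linarith
    have h3 : ∑ k, (‖a k - b k‖ ^ 2 - ‖a k - b (Equiv.swap i j k)‖ ^ 2)
        = (‖a i - b i‖ ^ 2 - ‖a i - b j‖ ^ 2) + (‖a j - b j‖ ^ 2 - ‖a j - b i‖ ^ 2) := by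
      rw [Finset.sum_eq_add_of_mem i j (Finset.mem_univ i) (Finset.mem_univ j) hij]
      · simp [Equiv.swap_apply_left, Equiv.swap_apply_right]
      · intro k _ hk
        rw [Equiv.swap_apply_of_ne_of_ne hk.1 hk.2]
        ring
    rw [h3] at h2
    have e1 : ∀ x y : E, ‖x - y‖^2 = ‖x‖^2 - 2 * ⟪x,y⟫ + ‖y‖^2 := fun x y => norm_sub_sq_real x y
    rw [e1, e1, e1, e1] at h2
    rw [inner_sub_left, inner_sub_right, inner_sub_right]
    have : ⟪a j, b i⟫ = ⟪b i, a j⟫ := real_inner_comm _ _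
    nlinarith [real_inner_comm (a i) (b j), real_inner_comm (a j) (b i)]

open Finset RealInnerProductSpace in
private lemma rbtm_phi_nonpos {E : Type*} [NormedAddCommGroup E] [InnerProductSpace ℝ E]
    (n : ℕ) (a b : Fin n → E)
    (hswap : ∀ i j, (⟪a i - a j, b i - b j⟫ : ℝ) ≤ 0)
    (l : Fin n → ℝ) (hl0 : ∀ i, 0 ≤ l i) (hl1 : ∑ i, l i = 1) :
    (∑ i, l i * ⟪a i, b i⟫) - ‖∑ i, l i • ((2:ℝ)⁻¹ • (a i + b i))‖ ^ 2 ≤ 0 := by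
  set A : E := ∑ i, l i • a i with hA
  set B : E := ∑ i, l i • b i with hB
  have hc : ∑ i, l i • ((2:ℝ)⁻¹ • (a i + b i)) = (2:ℝ)⁻¹ • (A + B) := by
    rw [hA, hB, ← Finset.sum_add_distrib, Finset.smul_sum]
    exact Finset.sum_congr rfl fun i _ => by
      rw [smul_comm, smul_add]
  rw [hc]
  have hsm : ∀ x : E, ‖(2:ℝ)⁻¹ • x‖ ^ 2 = ‖x‖ ^ 2 / 4 := by
    intro x
    rw [norm_smul]
    simp [abs_of_nonneg]
    ring
  rw [hsm]
  have hplus : ‖A + B‖ ^ 2 = ‖A‖^2 + 2 * ⟪A, B⟫ + ‖B‖^2 := norm_add_sq_real A B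
  have hminus : ‖A - B‖ ^ 2 = ‖A‖^2 - 2 * ⟪A, B⟫ + ‖B‖^2 := norm_sub_sq_real A B
  have hABle : (∑ i, l i * ⟪a i, b i⟫) - ⟪A, B⟫ ≤ 0 := by
    have e1 : ∀ f : Fin n → ℝ, ∑ i, ∑ j, (l i * l j) * f i = ∑ i, l i * f i := by
      intro f
      calc ∑ i, ∑ j, (l i * l j) * f i = ∑ i, (l i * f i) * ∑ j, l j :=
            Finset.sum_congr rfl fun i _ => by
              rw [Finset.mul_sum]; exact Finset.sum_congr rfl fun j _ => by ring
        _ = ∑ i, l i * f i := by rw [hl1]; simp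
    have e2 : ∀ f : Fin n → ℝ, ∑ i, ∑ j, (l i * l j) * f j = ∑ j, l j * f j := by
      intro f
      rw [Finset.sum_comm]
      calc ∑ j, ∑ i, (l i * l j) * f j = ∑ j, ∑ i, (l j * l i) * f j :=
            Finset.sum_congr rfl fun j _ => Finset.sum_congr rfl fun i _ => by ring
        _ = ∑ j, l j * f j := e1 f
    have eAB : (⟪A, B⟫ : ℝ) = ∑ i, ∑ j, (l i * l j) * ⟪a i, b j⟫ := by
      rw [hA, hB, sum_inner]
      exact Finset.sum_congr rfl fun i _ => by
        rw [real_inner_smul_left, inner_sum, Finset.mul_sum]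
        exact Finset.sum_congr rfl fun j _ => by rw [real_inner_smul_right]; ring
    have eBA : (⟪A, B⟫ : ℝ) = ∑ i, ∑ j, (l i * l j) * ⟪a j, b i⟫ := by
      rw [eAB, Finset.sum_comm]
      exact Finset.sum_congr rfl fun j _ => Finset.sum_congr rfl fun i _ => by ring
    have key : (2:ℝ) * ((∑ i, l i * ⟪a i, b i⟫) - ⟪A, B⟫)
        = ∑ i, ∑ j, (l i * l j) * ⟪a i - a j, b i - b j⟫ := by
      have expand : ∑ i, ∑ j, (l i * l j) * ⟪a i - a j, b i - b j⟫
          = ∑ i, ∑ j, ((l i * l j) * ⟪a i, b i⟫ + (l i * l j) * ⟪a j, b j⟫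
              - (l i * l j) * ⟪a i, b j⟫ - (l i * l j) * ⟪a j, b i⟫) :=
        Finset.sum_congr rfl fun i _ => Finset.sum_congr rfl fun j _ => by
          rw [inner_sub_left, inner_sub_right, inner_sub_right]; ring
      rw [expand]
      simp only [Finset.sum_add_distrib, Finset.sum_sub_distrib]
      rw [e1 (fun i => ⟪a i, b i⟫), e2 (fun j => ⟪a j, b j⟫), ← eAB, ← eBA]
      ring
    have hnp : ∑ i, ∑ j, (l i * l j) * ⟪a i - a j, b i - b j⟫ ≤ 0 := by
      apply Finset.sum_nonpos
      intro i _
      apply Finset.sum_nonpos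
      intro j _
      exact mul_nonpos_of_nonneg_of_nonpos (mul_nonneg (hl0 i) (hl0 j)) (hswap i j)
    linarith
  nlinarith [sq_nonneg ‖A - B‖]

open Finset RealInnerProductSpace in
private lemma rbtm_main {E : Type*} [NormedAddCommGroup E] [InnerProductSpace ℝ E]
    (n : ℕ) (hn : 1 ≤ n) (a b : Fin n → E)
    (hPhi : ∀ l ∈ stdSimplex ℝ (Fin n),
      (∑ i, l i * ⟪a i, b i⟫) - ‖∑ i, l i • ((2:ℝ)⁻¹ • (a i + b i))‖ ^ 2 ≤ 0) :
    ∃ c : E, ∀ i, dist c (midpoint ℝ (a i) (b i)) ≤ dist (a i) (b i) / 2 := by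
  classical
  set q : Fin n → ℝ := fun i => ⟪a i, b i⟫ with hq
  set m : Fin n → E := fun i => (2:ℝ)⁻¹ • (a i + b i) with hm
  set Φ : (Fin n → ℝ) → ℝ := fun l => (∑ i, l i * q i) - ‖∑ i, l i • m i‖ ^ 2 with hΦ
  have hcont : Continuous Φ := by
    apply Continuous.sub
    · exact continuous_finset_sum _ fun i _ => (continuous_apply i).mul continuous_const
    · exact ((continuous_finset_sum _ fun i _ =>
        (continuous_apply i).smul continuous_const).norm.pow 2)
  have hne : (stdSimplex ℝ (Fin n)).Nonempty := by
    refine ⟨fun _ => (n:ℝ)⁻¹, fun i => by positivity, ?_⟩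
    have hn0 : (n:ℝ) ≠ 0 := by positivity
    simp [Finset.sum_const, hn0]
  obtain ⟨l, hl, hlmax⟩ := (isCompact_stdSimplex ℝ (Fin n)).exists_isMaxOn hne hcont.continuousOn
  obtain ⟨hl0, hl1⟩ := hl
  set c : E := ∑ i, l i • m i with hc
  set S : ℝ := ∑ i, l i * q i with hS
  refine ⟨c, fun i => ?_⟩
  -- first-order optimality in direction of vertex i
  have key : ∀ t : ℝ, 0 < t → t ≤ 1 →
      q i - S - 2 * ⟪c, m i - c⟫ ≤ t * ‖m i - c‖ ^ 2 := by
    intro t ht0 ht1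
    set lt : Fin n → ℝ := fun j => (1 - t) * l j + (if j = i then t else 0) with hlt
    have hmem : lt ∈ stdSimplex ℝ (Fin n) := by
      constructor
      · intro j
        have := hl0 j
        simp only [hlt]
        split <;> nlinarith
      · simp only [hlt]
        rw [Finset.sum_add_distrib, ← Finset.mul_sum, hl1, Finset.sum_ite_eq']
        simp
    have hqs : ∑ j, lt j * q j = (1 - t) * S + t * q i := by
      simp only [hlt]
      rw [hS, Finset.sum_congr rfl (fun j _ => show ((1 - t) * l j + (if j = i then t else 0)) * q j
        = (1 - t) * (l j * q j) + (if j = i then t * q j else 0) by split <;> ring)]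
      rw [Finset.sum_add_distrib, ← Finset.mul_sum, Finset.sum_ite_eq']
      simp
    have hms : ∑ j, lt j • m j = c + t • (m i - c) := by
      simp only [hlt]
      rw [Finset.sum_congr rfl (fun j _ => show ((1 - t) * l j + (if j = i then t else 0)) • m j
        = (1 - t) • (l j • m j) + (if j = i then t • m j else 0) by
          rw [add_smul, mul_smul]
          congr 1
          split <;> simp)]
      rw [Finset.sum_add_distrib, ← Finset.smul_sum, Finset.sum_ite_eq']
      simp only [Finset.mem_univ, if_pos, ← hc]
      rw [sub_smul, one_smul, smul_sub]
      abel
    have hΦle : Φ lt ≤ Φ l := hlmax hmem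
    rw [hΦ] at hΦle
    dsimp only at hΦle
    rw [hqs, hms, ← hS, ← hc] at hΦle
    have hnorm : ‖c + t • (m i - c)‖ ^ 2
        = ‖c‖ ^ 2 + 2 * (t * ⟪c, m i - c⟫) + t ^ 2 * ‖m i - c‖ ^ 2 := by
      rw [norm_add_sq_real, real_inner_smul_right, norm_smul]
      rw [Real.norm_eq_abs, abs_of_pos ht0, mul_pow]
    rw [hnorm] at hΦle
    have expand : t * (q i - S - 2 * ⟪c, m i - c⟫) ≤ t ^ 2 * ‖m i - c‖ ^ 2 := by nlinarith
    have := mul_le_mul_of_nonneg_left expand (le_of_lt (inv_pos.mpr ht0))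
    calc q i - S - 2 * ⟪c, m i - c⟫
        = t⁻¹ * (t * (q i - S - 2 * ⟪c, m i - c⟫)) := by
          field_simp
      _ ≤ t⁻¹ * (t ^ 2 * ‖m i - c‖ ^ 2) := this
      _ = t * ‖m i - c‖ ^ 2 := by field_simp
  have hD : q i - S - 2 * ⟪c, m i - c⟫ ≤ 0 := by
    by_contra hcon
    push_neg at hcon
    set D : ℝ := q i - S - 2 * ⟪c, m i - c⟫ with hDdef
    set K : ℝ := ‖m i - c‖ ^ 2 with hK
    have hK0 : 0 ≤ K := by positivity
    have ht0 : 0 < min 1 (D / (2 * (K + 1))) := by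
      apply lt_min one_pos
      positivity
    have := key _ ht0 (min_le_left _ _)
    have h2 : min 1 (D / (2 * (K + 1))) * K ≤ (D / (2 * (K + 1))) * K :=
      mul_le_mul_of_nonneg_right (min_le_right _ _) hK0
    have h3 : D ≤ (D / (2 * (K + 1))) * K := le_trans this h2
    rw [div_mul_eq_mul_div, le_div_iff₀ (by positivity)] at h3
    nlinarith
  -- conclude
  have hPhil : S - ‖c‖ ^ 2 ≤ 0 := hPhi l ⟨hl0, hl1⟩
  have hinner : (⟪c, m i - c⟫ : ℝ) = ⟪c, m i⟫ - ‖c‖ ^ 2 := by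
    rw [inner_sub_right, real_inner_self_eq_norm_sq]
  have hgoal2 : ‖c - m i‖ ^ 2 ≤ ‖(2:ℝ)⁻¹ • (a i - b i)‖ ^ 2 := by
    have h1 : ‖c - m i‖ ^ 2 = ‖c‖ ^ 2 - 2 * ⟪c, m i⟫ + ‖m i‖ ^ 2 := norm_sub_sq_real c (m i)
    have hsm : ∀ x : E, ‖(2:ℝ)⁻¹ • x‖ ^ 2 = ‖x‖ ^ 2 / 4 := by
      intro x
      rw [norm_smul]
      simp [abs_of_nonneg]
      ring
    have h2 : ‖m i‖ ^ 2 = ‖a i + b i‖ ^ 2 / 4 := hsm _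
    have h3 : ‖(2:ℝ)⁻¹ • (a i - b i)‖ ^ 2 = ‖a i - b i‖ ^ 2 / 4 := hsm _
    have h4 : ‖a i + b i‖ ^ 2 = ‖a i‖^2 + 2 * q i + ‖b i‖^2 := norm_add_sq_real _ _
    have h5 : ‖a i - b i‖ ^ 2 = ‖a i‖^2 - 2 * q i + ‖b i‖^2 := norm_sub_sq_real _ _
    nlinarith [hD, hPhil, hinner]
  have hgoal : ‖c - m i‖ ≤ ‖(2:ℝ)⁻¹ • (a i - b i)‖ :=
    (pow_le_pow_iff_left₀ (norm_nonneg _) (norm_nonneg _) two_ne_zero).mp hgoal2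
  have hmid : midpoint ℝ (a i) (b i) = m i := by
    rw [midpoint_eq_smul_add, hm]
    norm_num
  rw [dist_eq_norm, dist_eq_norm, hmid]
  calc ‖c - m i‖ ≤ ‖(2:ℝ)⁻¹ • (a i - b i)‖ := hgoal
    _ = ‖a i - b i‖ / 2 := by
      rw [norm_smul, Real.norm_eq_abs, abs_of_nonneg (by norm_num : (0:ℝ) ≤ 2⁻¹)]
      ring


/-- **Red-blue Tverberg matchings** (Huemer et al.; Pirahmad, Polyanskii, Vasilevskii).
Let `a 0, …, a (n-1)` be `n` red points and `b 0, …, b (n-1)` be `n` blue points (all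
distinct) in a real inner product space, and suppose the red-blue matching pairing
`a i` with `b i` maximizes the sum of squared distances between matched points over
all red-blue matchings (i.e., over all permutations of the blue points). Then the
diametral balls `B(a i, b i)` have a common point `c`: a point whose distance to each
midpoint `(a i + b i)/2` is at most `‖a i − b i‖/2`. -/
theorem red_blue_tverberg_matching
    {E : Type*} [NormedAddCommGroup E] [InnerProductSpace ℝ E]
    (n : ℕ) (hn : 1 ≤ n) (a b : Fin n → E)
    (ha : Function.Injective a) (hb : Function.Injective b)
    (hab : ∀ i j, a i ≠ b j)
    (hmax : ∀ π : Equiv.Perm (Fin n),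
      ∑ i, ‖a i - b (π i)‖ ^ 2 ≤ ∑ i, ‖a i - b i‖ ^ 2) :
    ∃ c : E, ∀ i, dist c (midpoint ℝ (a i) (b i)) ≤ dist (a i) (b i) / 2 :=
  rbtm_main n hn a b fun l hl =>
    rbtm_phi_nonpos n a b (rbtm_swap n a b hmax) l hl.1 hl.2
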